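/- For every integer k ≥ 0, every 2-layer k-planar graph has pathwidth at most k + 1. -/

import Mathlib

/-- A path decomposition of a graph `G` with bags `B 0, …, B (n-1)` arranged along a path:
every vertex is in some bag, every edge has both endpoints in a common bag, and the bags
containing any fixed vertex form a contiguous interval. -/
def IsPathDecomp {V : Type*} (G : SimpleGraph V) (n : ℕ) (B : Fin n → Finset V) : Prop :=
  (∀ v : V, ∃ i, v ∈ B i) ∧
  (∀ u v : V, G.Adj u v → ∃ i, u ∈ B i ∧ v ∈ B i) ∧
  (∀ (v : V) (i j l : Fin n), i ≤ j → j ≤ l → v ∈ B i → v ∈ B l → v ∈ B j)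

/-- The pathwidth of `G`: the least `w` such that `G` has a path decomposition
all of whose bags have at most `w + 1` vertices. -/
noncomputable def pathwidth {V : Type*} (G : SimpleGraph V) : ℕ :=
  sInf {w | ∃ (n : ℕ) (B : Fin n → Finset V), IsPathDecomp G n B ∧ ∀ i, (B i).card ≤ w + 1}

/-- A 2-layer drawing of a bipartite graph `G` with bipartition `(X, Y)`:
the vertices of `X` (resp. `Y`) are placed at positions `1, …, |X|` (resp. `1, …, |Y|`)
on two parallel lines, i.e. `pos` restricts to bijections `X → {1, …, |X|}` and
`Y → {1, …, |Y|}`. -/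
structure TwoLayerDrawing {V : Type*} (G : SimpleGraph V) (X Y : Finset V) where
  pos : V → ℕ
  cover : ∀ v : V, v ∈ X ∨ v ∈ Y
  disj : ∀ v : V, ¬(v ∈ X ∧ v ∈ Y)
  bipart : ∀ u v : V, G.Adj u v → ((u ∈ X ∧ v ∈ Y) ∨ (u ∈ Y ∧ v ∈ X))
  bijX : Set.BijOn pos ↑X (Set.Icc 1 X.card)
  bijY : Set.BijOn pos ↑Y (Set.Icc 1 Y.card)

/-- Two edges `{x₁, y₁}` and `{x₂, y₂}` with `x₁, x₂ ∈ X`, `y₁, y₂ ∈ Y` cross in the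
drawing iff one has its `X`-endpoint to the left of the other's but its `Y`-endpoint
to the right. -/
def TwoLayerDrawing.Crosses {V : Type*} {G : SimpleGraph V} {X Y : Finset V}
    (D : TwoLayerDrawing G X Y) (e₁ e₂ : Sym2 V) : Prop :=
  ∃ x₁ y₁ x₂ y₂ : V, x₁ ∈ X ∧ x₂ ∈ X ∧ y₁ ∈ Y ∧ y₂ ∈ Y ∧
    e₁ = s(x₁, y₁) ∧ e₂ = s(x₂, y₂) ∧
    ((D.pos x₁ < D.pos x₂ ∧ D.pos y₂ < D.pos y₁) ∨
      (D.pos x₂ < D.pos x₁ ∧ D.pos y₁ < D.pos y₂))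

/-- A 2-layer drawing is `k`-planar if every edge crosses at most `k` other edges. -/
def TwoLayerDrawing.IsKPlanar {V : Type*} {G : SimpleGraph V} {X Y : Finset V}
    (D : TwoLayerDrawing G X Y) (k : ℕ) : Prop :=
  ∀ e ∈ G.edgeSet, {e' | e' ∈ G.edgeSet ∧ D.Crosses e e'}.ncard ≤ k

/-- `G` is a 2-layer `k`-planar graph if it admits a 2-layer `k`-planar drawing with
respect to some bipartition. -/
def IsTwoLayerKPlanar {V : Type*} (G : SimpleGraph V) (k : ℕ) : Prop :=
  ∃ (X Y : Finset V) (D : TwoLayerDrawing G X Y), D.IsKPlanar k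

theorem stmt17 (k : ℕ) {V : Type*} (G : SimpleGraph V) (h : IsTwoLayerKPlanar G k) :
    pathwidth G ≤ k + 1 := by
  classical
  obtain ⟨X, Y, D, hk⟩ := h
  haveI : Finite V := by
    refine Set.finite_univ_iff.mp (((X ∪ Y).finite_toSet).subset ?_)
    intro v _
    simpa using D.cover v
  haveI : Fintype V := Fintype.ofFinite V
  have hXinj : ∀ {a b : V}, a ∈ X → b ∈ X → D.pos a = D.pos b → a = b := by
    intro a b ha hb hab
    exact D.bijX.injOn (Finset.mem_coe.mpr ha) (Finset.mem_coe.mpr hb) hab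
  have hYinj : ∀ {a b : V}, a ∈ Y → b ∈ Y → D.pos a = D.pos b → a = b := by
    intro a b ha hb hab
    exact D.bijY.injOn (Finset.mem_coe.mpr ha) (Finset.mem_coe.mpr hb) hab
  set F : Finset (V × V) := (X ×ˢ Y).filter (fun p => G.Adj p.1 p.2) with hF
  have hFmem : ∀ {p : V × V}, p ∈ F ↔ (p.1 ∈ X ∧ p.2 ∈ Y ∧ G.Adj p.1 p.2) := by
    intro p
    simp [hF, Finset.mem_filter, Finset.mem_product, and_assoc]
  set key : V × V → ℕ ×ₗ ℕ := fun p => toLex (D.pos p.1, D.pos p.2) with hkey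
  have hkeyInj : ∀ {p q : V × V}, p ∈ F → q ∈ F → key p = key q → p = q := by
    intro p q hp hq hpq
    obtain ⟨hp1, hp2, -⟩ := hFmem.mp hp
    obtain ⟨hq1, hq2, -⟩ := hFmem.mp hq
    simp only [hkey, toLex_inj, Prod.ext_iff] at hpq
    exact Prod.ext (hXinj hp1 hq1 hpq.1) (hYinj hp2 hq2 hpq.2)
  set m := F.card with hm
  set K : Finset (ℕ ×ₗ ℕ) := F.image key with hK
  have hKcard : K.card = m := Finset.card_image_of_injOn (fun p hp q hq => hkeyInj hp hq)
  set κ := K.orderIsoOfFin hKcard with hκ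
  have hedge : ∀ i : Fin m, ∃ p, p ∈ F ∧ key p = (κ i : ℕ ×ₗ ℕ) := by
    intro i
    have hmem : (κ i : ℕ ×ₗ ℕ) ∈ F.image key := (κ i).2
    rw [Finset.mem_image] at hmem
    obtain ⟨p, hp, hpk⟩ := hmem
    exact ⟨p, hp, hpk⟩
  have hκmono : ∀ {a b : Fin m}, a ≤ b → (κ a : ℕ ×ₗ ℕ) ≤ (κ b : ℕ ×ₗ ℕ) :=
    fun hab => Subtype.coe_le_coe.mpr (κ.monotone hab)
  have hidx : ∀ p, p ∈ F → ∃ i : Fin m, key p = (κ i : ℕ ×ₗ ℕ) := by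
    intro p hp
    have hkp : key p ∈ K := Finset.mem_image_of_mem key hp
    refine ⟨κ.symm ⟨key p, hkp⟩, ?_⟩
    rw [OrderIso.apply_symm_apply]
  set bigBag : Fin m → Finset V := fun i =>
    Finset.univ.filter (fun v =>
      (∃ j, j ≤ i ∧ ∃ p, p ∈ F ∧ (p.1 = v ∨ p.2 = v) ∧ key p = (κ j : ℕ ×ₗ ℕ)) ∧
      (∃ l, i ≤ l ∧ ∃ p, p ∈ F ∧ (p.1 = v ∨ p.2 = v) ∧ key p = (κ l : ℕ ×ₗ ℕ))) with hbigBag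
  have hmemBig : ∀ (v : V) (i : Fin m), v ∈ bigBag i ↔
      ((∃ j, j ≤ i ∧ ∃ p, p ∈ F ∧ (p.1 = v ∨ p.2 = v) ∧ key p = (κ j : ℕ ×ₗ ℕ)) ∧
       (∃ l, i ≤ l ∧ ∃ p, p ∈ F ∧ (p.1 = v ∨ p.2 = v) ∧ key p = (κ l : ℕ ×ₗ ℕ))) := by
    intro v i
    simp [hbigBag]
  have hvmem : ∀ (v : V) (i : Fin m),
      (∃ p, p ∈ F ∧ (p.1 = v ∨ p.2 = v) ∧ key p = (κ i : ℕ ×ₗ ℕ)) → v ∈ bigBag i := by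
    intro v i hv
    exact (hmemBig v i).mpr ⟨⟨i, le_refl i, hv⟩, ⟨i, le_refl i, hv⟩⟩
  set I : Finset V := Finset.univ.filter (fun v => ∀ p ∈ F, p.1 ≠ v ∧ p.2 ≠ v) with hI
  set ι : Fin I.card → V := fun t => (I.equivFin.symm t : V) with hι
  have hιI : ∀ t, ι t ∈ I := fun t => (I.equivFin.symm t).2
  have hιinj : ∀ {t t' : Fin I.card}, ι t = ι t' → t = t' := by
    intro t t' htt
    exact I.equivFin.symm.injective (Subtype.ext htt)
  set n := m + I.card with hn
  set B : Fin n → Finset V := fun i =>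
    if h : (i : ℕ) < m then bigBag ⟨i, h⟩
    else {ι ⟨(i : ℕ) - m, by have := i.isLt; omega⟩} with hB
  have hBlt : ∀ (i : Fin n) (him : (i : ℕ) < m), B i = bigBag ⟨(i : ℕ), him⟩ := by
    intro i him
    simp only [hB]
    rw [dif_pos him]
  -- main bound
  have hBound : ∀ i : Fin m, (bigBag i).card ≤ k + 2 := by
    intro i
    obtain ⟨p, hpF, hpkey⟩ := hedge i
    obtain ⟨x, y⟩ := p
    obtain ⟨hxX, hyY, hAdj⟩ := hFmem.mp hpF
    set crossFin : Finset (Sym2 V) := G.edgeFinset.filter (fun e' => D.Crosses s(x, y) e') with hCF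
    have hcrossCard : crossFin.card ≤ k := by
      have h1 : {e' | e' ∈ G.edgeSet ∧ D.Crosses s(x, y) e'} = ↑crossFin := by
        ext e'
        simp [hCF, SimpleGraph.mem_edgeFinset]
      have h2 := hk s(x, y) (by rwa [SimpleGraph.mem_edgeSet])
      rwa [h1, Set.ncard_coe_finset] at h2
    have hcross : ∀ v ∈ bigBag i, v ≠ x → v ≠ y →
        ∃ a, a ∈ X ∧ v ∈ Y ∧ s(a, v) ∈ crossFin := by
      intro v hv hvx hvy
      obtain ⟨⟨j, hji, p', hp'F, hp'v, hp'key⟩, ⟨l, hil, q', hq'F, hq'v, hq'key⟩⟩ :=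
        (hmemBig v i).mp hv
      obtain ⟨hp'1, hp'2, hp'adj⟩ := hFmem.mp hp'F
      obtain ⟨hq'1, hq'2, hq'adj⟩ := hFmem.mp hq'F
      have hle1 : key p' ≤ key (x, y) := by
        rw [hp'key, hpkey]
        exact hκmono hji
      have hle2 : key (x, y) ≤ key q' := by
        rw [hq'key, hpkey]
        exact hκmono hil
      simp only [hkey] at hle1 hle2
      rw [Prod.Lex.le_iff] at hle1 hle2
      simp only [ofLex_toLex] at hle1 hle2
      rcases hp'v with h1 | h1
      · -- v is an X-vertex : impossible unless v = x
        have hvX : v ∈ X := h1 ▸ hp'1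
        have hq1v : q'.1 = v := by
          rcases hq'v with h2 | h2
          · exact h2
          · exact absurd ⟨hvX, h2 ▸ hq'2⟩ (D.disj v)
        have hne : D.pos v ≠ D.pos x := fun hEq => hvx (hXinj hvX hxX hEq)
        rw [h1] at hle1
        rw [hq1v] at hle2
        exfalso
        rcases hle1 with h3 | h3 <;> rcases hle2 with h4 | h4 <;> omega
      · -- v is a Y-vertex
        have hvY : v ∈ Y := h1 ▸ hp'2
        have hq2v : q'.2 = v := by
          rcases hq'v with h2 | h2
          · exact absurd ⟨h2 ▸ hq'1, hvY⟩ (D.disj v)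
          · exact h2
        have hne : D.pos v ≠ D.pos y := fun hEq => hvy (hYinj hvY hyY hEq)
        rw [h1] at hle1
        rw [hq2v] at hle2
        rcases lt_or_gt_of_ne hne with hlt | hgt
        · have hxlt : D.pos x < D.pos q'.1 := by
            rcases hle2 with h4 | h4
            · exact h4
            · omega
          refine ⟨q'.1, hq'1, hvY, ?_⟩
          rw [hCF, Finset.mem_filter]
          refine ⟨?_, x, y, q'.1, v, hxX, hq'1, hyY, hvY, rfl, rfl, Or.inl ⟨hxlt, hlt⟩⟩
          rw [SimpleGraph.mem_edgeFinset, SimpleGraph.mem_edgeSet]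
          exact hq2v ▸ hq'adj
        · have hxgt : D.pos p'.1 < D.pos x := by
            rcases hle1 with h3 | h3
            · exact h3
            · omega
          refine ⟨p'.1, hp'1, hvY, ?_⟩
          rw [hCF, Finset.mem_filter]
          refine ⟨?_, x, y, p'.1, v, hxX, hp'1, hyY, hvY, rfl, rfl, Or.inr ⟨hxgt, hgt⟩⟩
          rw [SimpleGraph.mem_edgeFinset, SimpleGraph.mem_edgeSet]
          exact h1 ▸ hp'adj
    -- counting
    set f : V → Sym2 V := fun v =>
      if hv : ∃ a, a ∈ X ∧ v ∈ Y ∧ s(a, v) ∈ crossFin then s(hv.choose, v) else s(v, v) with hf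
    have hex : ∀ v ∈ bigBag i \ {x, y}, ∃ a, a ∈ X ∧ v ∈ Y ∧ s(a, v) ∈ crossFin := by
      intro v hv
      rw [Finset.mem_sdiff, Finset.mem_insert, Finset.mem_singleton] at hv
      exact hcross v hv.1 (fun h => hv.2 (Or.inl h)) (fun h => hv.2 (Or.inr h))
    have hfmaps : ∀ v ∈ bigBag i \ {x, y}, f v ∈ crossFin := by
      intro v hv
      have hev := hex v hv
      simp only [hf]
      rw [dif_pos hev]
      exact hev.choose_spec.2.2
    have hfinj : Set.InjOn f ↑(bigBag i \ {x, y}) := by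
      intro v hv w hw hvw
      have hev := hex v (Finset.mem_coe.mp hv)
      have hew := hex w (Finset.mem_coe.mp hw)
      simp only [hf] at hvw
      rw [dif_pos hev, dif_pos hew] at hvw
      rcases Sym2.eq_iff.mp hvw with ⟨-, h2⟩ | ⟨h1, h2⟩
      · exact h2
      · exfalso
        refine D.disj v ⟨?_, hev.choose_spec.2.1⟩
        rw [h2]
        exact hew.choose_spec.1
    have hc1 : (bigBag i \ {x, y}).card ≤ crossFin.card :=
      Finset.card_le_card_of_injOn f hfmaps hfinj
    have hc2 : bigBag i ⊆ (bigBag i \ {x, y}) ∪ {x, y} := by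
      intro v hv
      by_cases hxy : v ∈ ({x, y} : Finset V)
      · exact Finset.mem_union_right _ hxy
      · exact Finset.mem_union_left _ (Finset.mem_sdiff.mpr ⟨hv, hxy⟩)
    have hc3 : ({x, y} : Finset V).card ≤ 2 := by
      simpa using Finset.card_insert_le x {y}
    have hc4 := Finset.card_le_card hc2
    have hc5 := Finset.card_union_le (bigBag i \ {x, y}) ({x, y} : Finset V)
    omega
  -- decomposition properties
  have hedgeBag : ∀ p, p ∈ F → ∃ i : Fin n, p.1 ∈ B i ∧ p.2 ∈ B i := by
    intro p hp
    obtain ⟨j, hj⟩ := hidx p hp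
    have hjm : (j : ℕ) < m := j.isLt
    have hjn : (j : ℕ) < n := by rw [hn]; omega
    refine ⟨⟨(j : ℕ), hjn⟩, ?_, ?_⟩
    · rw [hBlt ⟨(j : ℕ), hjn⟩ hjm]
      have hEq : (⟨(j : ℕ), hjm⟩ : Fin m) = j := Fin.ext rfl
      rw [hEq]
      exact hvmem _ j ⟨p, hp, Or.inl rfl, hj⟩
    · rw [hBlt ⟨(j : ℕ), hjn⟩ hjm]
      have hEq : (⟨(j : ℕ), hjm⟩ : Fin m) = j := Fin.ext rfl
      rw [hEq]
      exact hvmem _ j ⟨p, hp, Or.inr rfl, hj⟩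
  have cond1 : ∀ v : V, ∃ i : Fin n, v ∈ B i := by
    intro v
    by_cases hv : v ∈ I
    · set t := I.equivFin ⟨v, hv⟩ with ht
      have htn : m + (t : ℕ) < n := by rw [hn]; have := t.isLt; omega
      refine ⟨⟨m + (t : ℕ), htn⟩, ?_⟩
      have hnot : ¬ ((⟨m + (t : ℕ), htn⟩ : Fin n) : ℕ) < m := by simp
      simp only [hB]
      rw [dif_neg hnot, Finset.mem_singleton]
      suffices hsuf : ∀ (s : Fin I.card), (s : ℕ) = (t : ℕ) → v = ι s by
        exact hsuf _ (by simp)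
      intro s hs
      have : s = t := Fin.ext hs
      rw [this, hι, ht]
      simp
    · rw [hI, Finset.mem_filter] at hv
      simp only [Finset.mem_univ, true_and, not_forall] at hv
      obtain ⟨p, hpF, hpv⟩ := hv
      rw [not_and_or, not_ne_iff, not_ne_iff] at hpv
      obtain ⟨i, h1, h2⟩ := hedgeBag p hpF
      rcases hpv with h | h
      · exact ⟨i, h ▸ h1⟩
      · exact ⟨i, h ▸ h2⟩
  have cond2 : ∀ u v : V, G.Adj u v → ∃ i : Fin n, u ∈ B i ∧ v ∈ B i := by
    intro u v hadj
    rcases D.bipart u v hadj with ⟨hu, hv⟩ | ⟨hu, hv⟩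
    · exact hedgeBag (u, v) (hFmem.mpr ⟨hu, hv, hadj⟩)
    · obtain ⟨i, h1, h2⟩ := hedgeBag (v, u) (hFmem.mpr ⟨hv, hu, hadj.symm⟩)
      exact ⟨i, h2, h1⟩
  have cond3 : ∀ (v : V) (i j l : Fin n), i ≤ j → j ≤ l → v ∈ B i → v ∈ B l → v ∈ B j := by
    intro v i j l hij hjl hvi hvl
    have hij' : (i : ℕ) ≤ (j : ℕ) := hij
    have hjl' : (j : ℕ) ≤ (l : ℕ) := hjl
    by_cases him : (i : ℕ) < m
    · by_cases hlm : (l : ℕ) < m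
      · have hjm : (j : ℕ) < m := by omega
        rw [hBlt i him] at hvi
        rw [hBlt l hlm] at hvl
        rw [hBlt j hjm]
        obtain ⟨⟨j₁, hj₁, hinc₁⟩, -⟩ := (hmemBig v _).mp hvi
        obtain ⟨-, ⟨l₂, hl₂, hinc₂⟩⟩ := (hmemBig v _).mp hvl
        refine (hmemBig v _).mpr ⟨⟨j₁, le_trans hj₁ ?_, hinc₁⟩, ⟨l₂, le_trans ?_ hl₂, hinc₂⟩⟩
        · exact Fin.mk_le_mk.mpr hij'
        · exact Fin.mk_le_mk.mpr hjl'
      · exfalso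
        rw [hBlt i him] at hvi
        obtain ⟨⟨j₁, hj₁, p, hpF, hpv, -⟩, -⟩ := (hmemBig v _).mp hvi
        simp only [hB] at hvl
        rw [dif_neg hlm, Finset.mem_singleton] at hvl
        have hvI : v ∈ I := hvl ▸ hιI _
        rw [hI, Finset.mem_filter] at hvI
        have := hvI.2 p hpF
        tauto
    · have hjm : ¬ (j : ℕ) < m := by omega
      have hlm : ¬ (l : ℕ) < m := by omega
      simp only [hB] at hvi hvl ⊢
      rw [dif_neg him, Finset.mem_singleton] at hvi
      rw [dif_neg hlm, Finset.mem_singleton] at hvl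
      rw [dif_neg hjm, Finset.mem_singleton]
      have h1 := hvi.symm.trans hvl
      have h2 := hιinj h1
      have h3 : (i : ℕ) - m = (l : ℕ) - m := congrArg Fin.val h2
      rw [hvi]
      apply congrArg
      apply Fin.ext
      show (i : ℕ) - m = (j : ℕ) - m
      omega
  have hcard : ∀ i : Fin n, (B i).card ≤ (k + 1) + 1 := by
    intro i
    by_cases him : (i : ℕ) < m
    · rw [hBlt i him]
      have := hBound ⟨(i : ℕ), him⟩
      omega
    · simp only [hB]
      rw [dif_neg him]
      simp
  unfold pathwidth
  exact Nat.sInf_le ⟨n, B, ⟨cond1, cond2, cond3⟩, hcard⟩
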